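/- Conversely, if the gradient flow of f is μ-globally exponentially stable, then f satisfies the μ-global Polyak–Łojasiewicz inequality. Precisely: fix x₀ ∈ E and μ > 0, and suppose there is a curve φ : ℝ → E with φ(0) = x₀, having derivative φ'(t) = −∇f(φ(t)) at every t ≥ 0, such that f(φ(t)) − f̲ ≤ (f(x₀) − f̲) · exp(−μ t) for all t ≥ 0. Then ‖∇f(x₀)‖² ≥ μ (f(x₀) − f̲). -/

import Mathlib

/-- If the gradient flow of `f` is μ-globally exponentially stable, then `f` satisfies the
μ-global Polyak–Łojasiewicz inequality at the initial point. -/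
theorem exponential_stability_implies_gPLI
    {E : Type*} [NormedAddCommGroup E] [InnerProductSpace ℝ E] [FiniteDimensional ℝ E]
    (f : E → ℝ) (hf : Differentiable ℝ f) (hbdd : BddBelow (Set.range f))
    (x₀ : E) (μ : ℝ) (hμ : 0 < μ)
    (φ : ℝ → E) (hφ0 : φ 0 = x₀)
    (hφ : ∀ t : ℝ, 0 ≤ t → HasDerivAt φ (-gradient f (φ t)) t)
    (hGES : ∀ t : ℝ, 0 ≤ t →
      f (φ t) - (⨅ y, f y) ≤ (f x₀ - ⨅ y, f y) * Real.exp (-μ * t)) :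
    ‖gradient f x₀‖ ^ 2 ≥ μ * (f x₀ - ⨅ y, f y) := by
  set c : ℝ := ⨅ y, f y with hc
  set g : ℝ → ℝ := fun t => f (φ t) - c - (f x₀ - c) * Real.exp (-μ * t) with hg
  -- derivative of f ∘ φ at 0
  have hgrad : HasGradientAt f (gradient f x₀) x₀ := (hf x₀).hasGradientAt
  have h1 : HasDerivAt (fun t => f (φ t)) (-‖gradient f x₀‖ ^ 2) 0 := by
    have hφ0' : HasDerivAt φ (-gradient f x₀) 0 := by
      have := hφ 0 le_rfl; rwa [hφ0] at this
    have hgrad' : HasGradientAt f (gradient f x₀) (φ 0) := by rw [hφ0]; exact hgrad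
    have := (hgrad'.hasFDerivAt).comp_hasDerivAt 0 (hφ 0 le_rfl)
    rw [hφ0] at this
    simp [-toDual_gradient, inner_neg_right, real_inner_self_eq_norm_sq, Function.comp, sq] at this; rw [sq]; exact this
  have h2 : HasDerivAt (fun t : ℝ => (f x₀ - c) * Real.exp (-μ * t))
      ((f x₀ - c) * (-μ)) 0 := by
    have hlin : HasDerivAt (fun t : ℝ => -μ * t) (-μ) 0 := by
      simpa using (hasDerivAt_id (0:ℝ)).const_mul (-μ)
    have : HasDerivAt (fun t : ℝ => Real.exp (-μ * t)) (Real.exp (-μ * 0) * (-μ)) 0 :=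
      (Real.hasDerivAt_exp _).comp 0 hlin
    simpa using this.const_mul (f x₀ - c)
  have hgd : HasDerivAt g (-‖gradient f x₀‖ ^ 2 - (f x₀ - c) * (-μ)) 0 :=
    (h1.sub_const c).sub h2
  -- g ≤ 0 on [0, ∞), g 0 = 0, hence right derivative ≤ 0
  have hg0 : g 0 = 0 := by simp [hg, hφ0]
  have hle : ∀ t ∈ Set.Ioi (0:ℝ), g t ≤ 0 := fun t ht => by
    have := hGES t (le_of_lt ht)
    simp only [hg]; linarith
  have hslope : Filter.Tendsto (slope g 0) (nhdsWithin 0 (Set.Ioi 0))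
      (nhds (-‖gradient f x₀‖ ^ 2 - (f x₀ - c) * (-μ))) :=
    (hasDerivWithinAt_iff_tendsto_slope.mp (hgd.hasDerivWithinAt)).mono_left
      (nhdsWithin_mono _ (fun x hx => ⟨Set.mem_univ x, ne_of_gt hx⟩))
  have hd_nonpos : -‖gradient f x₀‖ ^ 2 - (f x₀ - c) * (-μ) ≤ 0 := by
    refine le_of_tendsto hslope ?_
    filter_upwards [self_mem_nhdsWithin] with t ht
    have h1 : g t ≤ 0 := hle t ht
    have ht0 : (0:ℝ) < t := ht
    rw [slope_def_field, hg0]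
    simp only [sub_zero]
    exact div_nonpos_of_nonpos_of_nonneg h1 ht0.le
  nlinarith [hd_nonpos]
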